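/- Inner-product equivalence: there exist node weights w' : Fin n₁ → ℝ with w' i ≠ 0 for all i and edge weights u' : Fin n₁ → ℝ with u' i ≠ 0 for all i ≠ 0 such that the Generation Matrix G' = G'(w',u') of the 1-order subtree T⁽¹⁾ satisfies M_Tᵀ · M_T = G'ᵀ · G'. -/

import Mathlib

open Matrix Finset

def childSet (n n₁ : ℕ) (f : Fin n → Fin n) (hn₁n : n₁ < n) (a : Fin n₁) : Finset (Fin n₁) :=
  Finset.univ.filter
    (fun i : Fin n₁ => (i : ℕ) ≠ 0 ∧ ((f (Fin.castLE hn₁n.le i)) : ℕ) = (a : ℕ))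

lemma mem_childSet {n n₁ : ℕ} {f : Fin n → Fin n} {hn₁n : n₁ < n} {a i : Fin n₁} :
    i ∈ childSet n n₁ f hn₁n a ↔ (i : ℕ) ≠ 0 ∧ ((f (Fin.castLE hn₁n.le i)) : ℕ) = (a : ℕ) := by
  simp [childSet]

lemma lt_of_mem_childSet {n n₁ : ℕ} {f : Fin n → Fin n} {hn₁n : n₁ < n}
    (hf : ∀ i : Fin n, (i : ℕ) ≠ 0 → (f i : ℕ) < (i : ℕ)) {a i : Fin n₁}
    (h : i ∈ childSet n n₁ f hn₁n a) : (a : ℕ) < (i : ℕ) := by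
  rw [mem_childSet] at h
  have h2 := hf (Fin.castLE hn₁n.le i) (by simp only [Fin.coe_castLE]; exact h.1)
  simp only [Fin.coe_castLE] at h2
  omega

noncomputable def sAux (n n₁ : ℕ) (f : Fin n → Fin n) (hn₁n : n₁ < n)
    (hf : ∀ i : Fin n, (i : ℕ) ≠ 0 → (f i : ℕ) < (i : ℕ)) (a : Fin n₁) : ℝ :=
  1 + ((Finset.univ.filter (fun i : Fin n => (i : ℕ) ≠ 0 ∧ f i = Fin.castLE hn₁n.le a)).card : ℝ)
    - ∑ i ∈ (childSet n n₁ f hn₁n a).attach, 1 / sAux n n₁ f hn₁n hf i.1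
  termination_by n₁ - (a : ℕ)
  decreasing_by
    have h2 := lt_of_mem_childSet hf i.2
    have ha := i.1.isLt
    omega

lemma one_le_sAux (n n₁ : ℕ) (f : Fin n → Fin n) (hn₁n : n₁ < n)
    (hf : ∀ i : Fin n, (i : ℕ) ≠ 0 → (f i : ℕ) < (i : ℕ))
    (hchild : ∀ a : Fin n₁,
      1 ≤ (Finset.univ.filter (fun i : Fin n => (i : ℕ) ≠ 0 ∧ f i = Fin.castLE hn₁n.le a)).card) :
    ∀ a : Fin n₁, 1 ≤ sAux n n₁ f hn₁n hf a := by
  have key : ∀ k : ℕ, ∀ a : Fin n₁, n₁ - (a : ℕ) ≤ k → 1 ≤ sAux n n₁ f hn₁n hf a := by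
    intro k
    induction k with
    | zero => intro a ha; exfalso; have := a.isLt; omega
    | succ k ih =>
      intro a _
      rw [sAux]
      have hterm : ∀ i ∈ (childSet n n₁ f hn₁n a).attach,
          1 / sAux n n₁ f hn₁n hf i.1 ≤ 1 := by
        intro i _
        have hlt : (a : ℕ) < (i.1 : ℕ) := lt_of_mem_childSet hf i.2
        have hs : 1 ≤ sAux n n₁ f hn₁n hf i.1 := by
          apply ih
          have := a.isLt
          omega
        rw [div_le_one (by linarith)]
        linarith
      have hsum : ∑ i ∈ (childSet n n₁ f hn₁n a).attach, 1 / sAux n n₁ f hn₁n hf i.1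
          ≤ ((childSet n n₁ f hn₁n a).card : ℝ) := by
        calc ∑ i ∈ (childSet n n₁ f hn₁n a).attach, 1 / sAux n n₁ f hn₁n hf i.1
            ≤ ∑ _i ∈ (childSet n n₁ f hn₁n a).attach, (1 : ℝ) := Finset.sum_le_sum hterm
          _ = ((childSet n n₁ f hn₁n a).attach.card : ℝ) := by simp
          _ = ((childSet n n₁ f hn₁n a).card : ℝ) := by rw [Finset.card_attach]
      have hcard : (childSet n n₁ f hn₁n a).card ≤ (Finset.univ.filter
          (fun i : Fin n => (i : ℕ) ≠ 0 ∧ f i = Fin.castLE hn₁n.le a)).card := by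
        apply Finset.card_le_card_of_injOn (fun i => Fin.castLE hn₁n.le i)
        · intro i hi
          rw [Finset.mem_coe, mem_childSet] at hi
          simp only [Finset.mem_coe, Finset.mem_filter, Finset.mem_univ, true_and]
          refine ⟨by simpa using hi.1, ?_⟩
          apply Fin.ext
          simp [hi.2]
        · intro x _ y _ hxy
          exact Fin.castLE_injective _ hxy
      have h1 : (1 : ℝ) ≤ ((Finset.univ.filter
          (fun i : Fin n => (i : ℕ) ≠ 0 ∧ f i = Fin.castLE hn₁n.le a)).card : ℝ) := by
        exact_mod_cast hchild a
      have h2 : ((childSet n n₁ f hn₁n a).card : ℝ) ≤ ((Finset.univ.filter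
          (fun i : Fin n => (i : ℕ) ≠ 0 ∧ f i = Fin.castLE hn₁n.le a)).card : ℝ) := by
        exact_mod_cast hcard
      linarith
  intro a; exact key (n₁ - a) a le_rfl

/-- Inner-product equivalence: there is a Generation Matrix `G'` of the `1`-order subtree
with `M_Tᵀ ⬝ M_T = G'ᵀ ⬝ G'`. -/
theorem consistencyMatrix_inner_product_equivalent (n n₁ : ℕ) [NeZero n]
    (f : Fin n → Fin n) (hf0 : f 0 = 0) (hf : ∀ i : Fin n, i ≠ 0 → f i < i)
    (hn₁ : 1 ≤ n₁) (hn₁n : n₁ < n)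
    (hleaf : ∀ i : Fin n, (∃ j : Fin n, j ≠ 0 ∧ f j = i) ↔ (i : ℕ) < n₁)
    (M : Matrix (Fin n) (Fin n₁) ℝ)
    (hM : ∀ (i : Fin n) (j : Fin n₁), M i j =
      if (i : ℕ) = (j : ℕ) then 1
      else if i ≠ 0 ∧ (j : ℕ) = (f i : ℕ) then -1 else 0) :
    ∃ (w' u' : Fin n₁ → ℝ) (G' : Matrix (Fin n₁) (Fin n₁) ℝ),
      (∀ i : Fin n₁, w' i ≠ 0) ∧
      (∀ i : Fin n₁, (i : ℕ) ≠ 0 → u' i ≠ 0) ∧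
      (∀ a b : Fin n₁, G' a b =
        if a = b then w' a
        else if (a : ℕ) ≠ 0 ∧ (b : ℕ) = (f (Fin.castLE hn₁n.le a) : ℕ) then -u' a
        else 0) ∧
      Mᵀ * M = G'ᵀ * G' := by
  -- translate the hypotheses to `ℕ`-valued form
  have hf' : ∀ i : Fin n, (i : ℕ) ≠ 0 → (f i : ℕ) < (i : ℕ) := by
    intro i hi
    have : i ≠ 0 := fun h => hi (by simp [h])
    exact Fin.lt_def.mp (hf i this)
  have hchild : ∀ a : Fin n₁,
      1 ≤ (Finset.univ.filter (fun i : Fin n => (i : ℕ) ≠ 0 ∧ f i = Fin.castLE hn₁n.le a)).card := by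
    intro a
    have hlt : ((Fin.castLE hn₁n.le a : Fin n) : ℕ) < n₁ := by
      simp only [Fin.coe_castLE]; exact a.isLt
    obtain ⟨j, hj0, hjf⟩ := (hleaf (Fin.castLE hn₁n.le a)).mpr hlt
    refine Finset.card_pos.mpr ⟨j, ?_⟩
    simp only [Finset.mem_filter, Finset.mem_univ, true_and]
    exact ⟨fun h => hj0 (Fin.ext (by simp [h])), hjf⟩
  have hs1 : ∀ a : Fin n₁, 1 ≤ sAux n n₁ f hn₁n hf' a := one_le_sAux n n₁ f hn₁n hf' hchild
  have hspos : ∀ a : Fin n₁, 0 < sAux n n₁ f hn₁n hf' a := fun a => lt_of_lt_of_le one_pos (hs1 a)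
  set w : Fin n₁ → ℝ := fun a => Real.sqrt (sAux n n₁ f hn₁n hf' a) with hw_def
  set u : Fin n₁ → ℝ := fun a => 1 / Real.sqrt (sAux n n₁ f hn₁n hf' a) with hu_def
  have hwpos : ∀ a, 0 < w a := fun a => Real.sqrt_pos.mpr (hspos a)
  have hupos : ∀ a, 0 < u a := fun a => by
    have := hspos a
    simp only [hu_def]
    positivity
  have hwsq : ∀ a, w a * w a = sAux n n₁ f hn₁n hf' a := fun a =>
    Real.mul_self_sqrt (hspos a).le
  have husq : ∀ a, u a * u a = 1 / sAux n n₁ f hn₁n hf' a := fun a => by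
    simp only [hu_def]
    rw [div_mul_div_comm, one_mul, Real.mul_self_sqrt (hspos a).le]
  have hwu : ∀ a, w a * u a = 1 := fun a => by
    have h : Real.sqrt (sAux n n₁ f hn₁n hf' a) ≠ 0 := (Real.sqrt_pos.mpr (hspos a)).ne'
    simp only [hw_def, hu_def]
    rw [mul_one_div, div_self h]
  refine ⟨w, u, Matrix.of (fun a b =>
      if a = b then w a
      else if (a : ℕ) ≠ 0 ∧ (b : ℕ) = (f (Fin.castLE hn₁n.le a) : ℕ) then -u a
      else 0),
    fun a => (hwpos a).ne', fun a _ => (hupos a).ne', fun a b => rfl, ?_⟩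
  set G : Matrix (Fin n₁) (Fin n₁) ℝ := Matrix.of (fun a b =>
      if a = b then w a
      else if (a : ℕ) ≠ 0 ∧ (b : ℕ) = (f (Fin.castLE hn₁n.le a) : ℕ) then -u a
      else 0) with hG_def
  have hG : ∀ a b : Fin n₁, G a b =
      if a = b then w a
      else if (a : ℕ) ≠ 0 ∧ (b : ℕ) = (f (Fin.castLE hn₁n.le a) : ℕ) then -u a
      else 0 := fun a b => rfl
  ext a b
  rw [Matrix.mul_apply, Matrix.mul_apply]
  simp only [Matrix.transpose_apply]
  by_cases hab : a = b
  · -- diagonal entries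
    subst hab
    -- left side: 1 + number of children of a
    have hMsq : ∀ i : Fin n, M i a * M i a =
        if ((i : ℕ) = (a : ℕ) ∨ ((i : ℕ) ≠ 0 ∧ f i = Fin.castLE hn₁n.le a)) then (1 : ℝ) else 0 := by
      intro i
      rw [hM i a]
      by_cases h1 : (i : ℕ) = (a : ℕ)
      · rw [if_pos h1, one_mul, if_pos (Or.inl h1)]
      · by_cases h2 : i ≠ 0 ∧ (a : ℕ) = (f i : ℕ)
        · have h3 : (i : ℕ) ≠ 0 ∧ f i = Fin.castLE hn₁n.le a :=
            ⟨fun h => h2.1 (Fin.ext (by simp [h])), Fin.ext (by simp [← h2.2])⟩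
          rw [if_neg h1, if_pos h2, if_pos (Or.inr h3)]
          norm_num
        · have h3 : ¬((i : ℕ) ≠ 0 ∧ f i = Fin.castLE hn₁n.le a) := by
            intro hc
            exact h2 ⟨fun h => hc.1 (by simp [h]), by simp [hc.2]⟩
          rw [if_neg h1, if_neg h2, zero_mul, if_neg]
          rintro (hc | hc)
          · exact h1 hc
          · exact h3 hc
    have hdisj : Disjoint
        (Finset.univ.filter (fun i : Fin n => (i : ℕ) = (a : ℕ)))
        (Finset.univ.filter (fun i : Fin n => (i : ℕ) ≠ 0 ∧ f i = Fin.castLE hn₁n.le a)) := by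
      rw [Finset.disjoint_left]
      intro i hi1 hi2
      simp only [Finset.mem_filter, Finset.mem_univ, true_and] at hi1 hi2
      have := hf' i hi2.1
      have : (f i : ℕ) = (a : ℕ) := by rw [hi2.2]; simp
      omega
    have hsingle : Finset.univ.filter (fun i : Fin n => (i : ℕ) = (a : ℕ))
        = {Fin.castLE hn₁n.le a} := by
      ext i
      simp only [Finset.mem_filter, Finset.mem_univ, true_and, Finset.mem_singleton, Fin.ext_iff,
        Fin.coe_castLE]
    have hL : ∑ i : Fin n, M i a * M i a =
        1 + ((Finset.univ.filter
          (fun i : Fin n => (i : ℕ) ≠ 0 ∧ f i = Fin.castLE hn₁n.le a)).card : ℝ) := by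
      simp_rw [hMsq]
      rw [Finset.sum_boole, Finset.filter_or, Finset.card_union_of_disjoint hdisj, hsingle]
      simp
    -- right side
    have hnotself : a ∉ childSet n n₁ f hn₁n a := by
      intro h
      have := lt_of_mem_childSet hf' h
      omega
    have hGsq : ∀ i : Fin n₁, G i a * G i a =
        (if i = a then sAux n n₁ f hn₁n hf' a else 0)
        + (if i ∈ childSet n n₁ f hn₁n a then 1 / sAux n n₁ f hn₁n hf' i else 0) := by
      intro i
      rw [hG i a]
      by_cases h1 : i = a
      · subst h1
        rw [if_pos (rfl : i = i), if_pos (rfl : i = i), if_neg hnotself, add_zero]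
        exact hwsq i
      · have hmem : ((i : ℕ) ≠ 0 ∧ (a : ℕ) = (f (Fin.castLE hn₁n.le i) : ℕ))
            ↔ i ∈ childSet n n₁ f hn₁n a := by
          rw [mem_childSet]
          constructor
          · rintro ⟨x, y⟩; exact ⟨x, y.symm⟩
          · rintro ⟨x, y⟩; exact ⟨x, y.symm⟩
        by_cases h2 : (i : ℕ) ≠ 0 ∧ (a : ℕ) = (f (Fin.castLE hn₁n.le i) : ℕ)
        · have h3 : i ∈ childSet n n₁ f hn₁n a := hmem.mp h2
          rw [if_neg h1, if_neg h1, if_pos h2, if_pos h3, neg_mul_neg, husq, zero_add]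
        · have h3 : i ∉ childSet n n₁ f hn₁n a := fun hc => h2 (hmem.mpr hc)
          rw [if_neg h1, if_neg h1, if_neg h2, if_neg h3, mul_zero, add_zero]
    have hR : ∑ i : Fin n₁, G i a * G i a =
        1 + ((Finset.univ.filter
          (fun i : Fin n => (i : ℕ) ≠ 0 ∧ f i = Fin.castLE hn₁n.le a)).card : ℝ) := by
      simp_rw [hGsq]
      rw [Finset.sum_add_distrib, Finset.sum_ite_eq' Finset.univ a, Finset.sum_ite_mem,
        Finset.univ_inter]
      rw [← Finset.sum_attach (childSet n n₁ f hn₁n a) (fun i => 1 / sAux n n₁ f hn₁n hf' i)]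
      simp only [Finset.mem_univ, if_true]
      conv_lhs => rw [sAux]
      ring
    rw [hL, hR]
  · -- off-diagonal entries
    have habv : (a : ℕ) ≠ (b : ℕ) := fun h => hab (Fin.ext h)
    have hMoff : ∀ i : Fin n, M i a * M i b =
        (if i = Fin.castLE hn₁n.le a then
          (if ((a : ℕ) ≠ 0 ∧ (b : ℕ) = (f (Fin.castLE hn₁n.le a) : ℕ)) then (-1 : ℝ) else 0) else 0)
        + (if i = Fin.castLE hn₁n.le b then
          (if ((b : ℕ) ≠ 0 ∧ (a : ℕ) = (f (Fin.castLE hn₁n.le b) : ℕ)) then (-1 : ℝ) else 0) else 0) := by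
      intro i
      rw [hM i a, hM i b]
      by_cases h1 : i = Fin.castLE hn₁n.le a
      · subst h1
        have hva : ((Fin.castLE hn₁n.le a : Fin n) : ℕ) = (a : ℕ) := by simp
        have hvb : ¬ ((Fin.castLE hn₁n.le a : Fin n) : ℕ) = (b : ℕ) := by simpa [hva] using habv
        have hne : Fin.castLE hn₁n.le a ≠ Fin.castLE hn₁n.le b := by
          intro hc; exact hab (Fin.castLE_injective _ hc)
        have h0iff : (Fin.castLE hn₁n.le a ≠ (0 : Fin n)) ↔ (a : ℕ) ≠ 0 := by
          simp [Fin.ext_iff]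
        rw [if_pos hva, one_mul, if_neg hvb, if_pos rfl, if_neg hne, add_zero]
        exact if_congr (and_congr_left' h0iff) rfl rfl
      · by_cases h2 : i = Fin.castLE hn₁n.le b
        · subst h2
          have hvb : ((Fin.castLE hn₁n.le b : Fin n) : ℕ) = (b : ℕ) := by simp
          have hva : ¬ ((Fin.castLE hn₁n.le b : Fin n) : ℕ) = (a : ℕ) := by
            simpa [hvb] using (Ne.symm habv)
          have h0iff : (Fin.castLE hn₁n.le b ≠ (0 : Fin n)) ↔ (b : ℕ) ≠ 0 := by
            simp [Fin.ext_iff]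
          have hne : ¬ (Fin.castLE hn₁n.le b = Fin.castLE hn₁n.le a) := by
            intro hc; exact hab (Fin.castLE_injective _ hc).symm
          rw [if_neg hva, if_pos hvb, mul_one, if_neg hne, if_pos rfl, zero_add]
          exact if_congr (and_congr_left' h0iff) rfl rfl
        · have hia : ¬ (i : ℕ) = (a : ℕ) := by
            intro hc; exact h1 (Fin.ext (by simpa using hc))
          have hib : ¬ (i : ℕ) = (b : ℕ) := by
            intro hc; exact h2 (Fin.ext (by simpa using hc))
          rw [if_neg hia, if_neg hib, if_neg h1, if_neg h2, add_zero]
          by_cases h3 : i ≠ 0 ∧ (a : ℕ) = (f i : ℕ)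
          · by_cases h4 : i ≠ 0 ∧ (b : ℕ) = (f i : ℕ)
            · exact absurd (h3.2.trans h4.2.symm) habv
            · rw [if_pos h3, if_neg h4, mul_zero]
          · rw [if_neg h3, zero_mul]
    have hGoff : ∀ i : Fin n₁, G i a * G i b =
        (if i = a then
          (if ((a : ℕ) ≠ 0 ∧ (b : ℕ) = (f (Fin.castLE hn₁n.le a) : ℕ)) then -(w a * u a) else 0) else 0)
        + (if i = b then
          (if ((b : ℕ) ≠ 0 ∧ (a : ℕ) = (f (Fin.castLE hn₁n.le b) : ℕ)) then -(u b * w b) else 0) else 0) := by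
      intro i
      rw [hG i a, hG i b]
      by_cases h1 : i = a
      · subst h1
        rw [if_pos rfl, if_neg hab, if_pos rfl, if_neg hab, add_zero]
        by_cases h2 : (i : ℕ) ≠ 0 ∧ (b : ℕ) = (f (Fin.castLE hn₁n.le i) : ℕ)
        · rw [if_pos h2, if_pos h2]; ring
        · rw [if_neg h2, if_neg h2, mul_zero]
      · by_cases h2 : i = b
        · subst h2
          rw [if_neg h1, if_pos rfl, if_neg h1, if_pos rfl, zero_add]
          by_cases h3 : (i : ℕ) ≠ 0 ∧ (a : ℕ) = (f (Fin.castLE hn₁n.le i) : ℕ)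
          · rw [if_pos h3, if_pos h3]; ring
          · rw [if_neg h3, if_neg h3, zero_mul]
        · rw [if_neg h1, if_neg h2, if_neg h1, if_neg h2, add_zero]
          by_cases h3 : (i : ℕ) ≠ 0 ∧ (a : ℕ) = (f (Fin.castLE hn₁n.le i) : ℕ)
          · by_cases h4 : (i : ℕ) ≠ 0 ∧ (b : ℕ) = (f (Fin.castLE hn₁n.le i) : ℕ)
            · exact absurd (h3.2.trans h4.2.symm) habv
            · rw [if_pos h3, if_neg h4, mul_zero]
          · rw [if_neg h3, zero_mul]
    have hvza : ((Fin.castLE hn₁n.le a : Fin n) ≠ (0 : Fin n)) ↔ (a : ℕ) ≠ 0 := by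
      simp [Fin.ext_iff]
    calc ∑ i : Fin n, M i a * M i b
        = (if ((a : ℕ) ≠ 0 ∧ (b : ℕ) = (f (Fin.castLE hn₁n.le a) : ℕ)) then (-1 : ℝ) else 0)
        + (if ((b : ℕ) ≠ 0 ∧ (a : ℕ) = (f (Fin.castLE hn₁n.le b) : ℕ)) then (-1 : ℝ) else 0) := by
          simp_rw [hMoff]
          rw [Finset.sum_add_distrib, Finset.sum_ite_eq' Finset.univ (Fin.castLE hn₁n.le a),
            Finset.sum_ite_eq' Finset.univ (Fin.castLE hn₁n.le b)]
          simp
      _ = ∑ i : Fin n₁, G i a * G i b := by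
          simp_rw [hGoff]
          rw [Finset.sum_add_distrib, Finset.sum_ite_eq' Finset.univ a,
            Finset.sum_ite_eq' Finset.univ b]
          simp only [Finset.mem_univ, if_true]
          rw [hwu a, mul_comm (u b) (w b), hwu b]
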